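/- With λ : [0,T] → R^k integrable and γ = ∫₀ᵀ λ↓(t) dt (decreasing rearrangement applied pointwise), the set { ∫₀ᵀ μ(t) dt : μ(t) ≺ λ(t) pointwise } equals { β ∈ R^k : β ≺ γ }. -/

import Mathlib

open scoped BigOperators

/-- The decreasing rearrangement of a vector in `ℝ^k`. -/
noncomputable def descSort {k : ℕ} (x : Fin k → ℝ) : Fin k → ℝ :=
  fun i => (x ∘ Tuple.sort x) i.rev

/-- Sum of the `m` largest entries of `x`, i.e. partial sum of the
decreasing rearrangement. -/
noncomputable def partSum {k : ℕ} (x : Fin k → ℝ) (m : ℕ) : ℝ :=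
  ∑ i : Fin k, if (i : ℕ) < m then descSort x i else 0

/-- `Majorized x y` means `x ≺ y`. -/
noncomputable def Majorized {k : ℕ} (x y : Fin k → ℝ) : Prop :=
  (∀ m : ℕ, m < k → partSum x m ≤ partSum y m) ∧ (∑ i, x i = ∑ i, y i)

namespace MajHelp
variable {k : ℕ}
noncomputable def dperm (x : Fin k → ℝ) : Equiv.Perm (Fin k) :=
  Fin.revPerm.trans (Tuple.sort x)
lemma descSort_eq (x : Fin k → ℝ) : descSort x = x ∘ ⇑(dperm x) := by funext i; rfl
lemma antitone_descSort (x : Fin k → ℝ) : Antitone (descSort x) := by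
  intro i j hij
  exact Tuple.monotone_sort x (Fin.rev_le_rev.mpr hij)
lemma descSort_comp (x : Fin k → ℝ) (σ : Equiv.Perm (Fin k)) :
    descSort (x ∘ ⇑σ) = descSort x := by
  funext i
  show ((x ∘ ⇑σ) ∘ ⇑(Tuple.sort (x ∘ ⇑σ))) i.rev = (x ∘ ⇑(Tuple.sort x)) i.rev
  rw [Tuple.comp_perm_comp_sort_eq_comp_sort]
lemma descSort_descSort (x : Fin k → ℝ) : descSort (descSort x) = descSort x := by
  conv_lhs => rw [descSort_eq x]
  rw [descSort_comp]
lemma sum_descSort (x : Fin k → ℝ) : ∑ i, descSort x i = ∑ i, x i := by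
  rw [descSort_eq]; exact Equiv.sum_comp (dperm x) x

-- Stage 2
noncomputable def dval (x : Fin k → ℝ) (n : ℕ) : ℝ :=
  if h : n < k then descSort x ⟨n, h⟩ else 0

lemma partSum_eq (x : Fin k → ℝ) (m : ℕ) :
    partSum x m = ∑ n ∈ Finset.range m, dval x n := by
  have h1 : partSum x m = ∑ n ∈ Finset.range k, (if n < m then dval x n else 0) := by
    rw [partSum, ← Fin.sum_univ_eq_sum_range (fun n => if n < m then dval x n else 0) k]
    refine Finset.sum_congr rfl fun i _ => ?_
    simp [dval, i.isLt]
  rw [h1]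
  have h2 : ∑ n ∈ Finset.range k, (if n < m then dval x n else 0)
      = ∑ n ∈ Finset.range (max k m), (if n < m then dval x n else 0) := by
    refine Finset.sum_subset (Finset.range_subset_range.mpr (le_max_left _ _)) fun n _ hn => ?_
    have hk : ¬ n < k := by simpa using hn
    simp [dval, hk]
  have h3 : ∑ n ∈ Finset.range m, dval x n
      = ∑ n ∈ Finset.range (max k m), (if n < m then dval x n else 0) := by
    rw [show ∑ n ∈ Finset.range m, dval x n
        = ∑ n ∈ Finset.range m, (if n < m then dval x n else 0) from
      Finset.sum_congr rfl fun n hn => by rw [if_pos (Finset.mem_range.mp hn)]]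
    refine Finset.sum_subset (Finset.range_subset_range.mpr (le_max_right _ _)) fun n _ hn => ?_
    have hm : ¬ n < m := by simpa using hn
    simp [hm]
  rw [h2, ← h3]

lemma strictMono_le_cast {m : ℕ} {f : Fin m → Fin k} (hf : StrictMono f) (j : Fin m) :
    (j : ℕ) ≤ (f j : ℕ) := by
  obtain ⟨n, hn⟩ := j
  induction n with
  | zero => exact Nat.zero_le _
  | succ n ih =>
    have h1 : (⟨n, Nat.lt_of_succ_lt hn⟩ : Fin m) < ⟨n + 1, hn⟩ := by
      simp [Fin.lt_def]
    have h2 := hf h1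
    have h3 : (f ⟨n, Nat.lt_of_succ_lt hn⟩ : ℕ) < (f ⟨n + 1, hn⟩ : ℕ) := h2
    have h4 := ih (Nat.lt_of_succ_lt hn)
    simp only [Fin.val_mk] at h3 h4 ⊢
    omega

lemma sum_le_partSum (x : Fin k → ℝ) (S : Finset (Fin k)) :
    ∑ i ∈ S, x i ≤ partSum x S.card := by
  classical
  have hx : ∀ i, x i = descSort x ((dperm x).symm i) := by
    intro i; rw [descSort_eq]; simp
  set T : Finset (Fin k) := S.image ⇑(dperm x).symm with hT
  have hcard : T.card = S.card := Finset.card_image_of_injective _ (Equiv.injective _)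
  have h0 : ∑ i ∈ S, x i = ∑ j ∈ T, descSort x j := by
    rw [hT, Finset.sum_image (fun a _ b _ h => (Equiv.injective _) h)]
    exact Finset.sum_congr rfl fun i _ => hx i
  rw [h0, ← hcard]
  obtain ⟨m, hm⟩ : ∃ m, T.card = m := ⟨_, rfl⟩
  rw [hm]
  have hmk : m ≤ k := by
    rw [← hm]
    have := T.card_le_univ
    simpa using this
  -- enumerate T increasingly
  set e := T.orderEmbOfFin hm with he
  have hmap : T = Finset.univ.map e.toEmbedding := by
    ext j
    simp only [Finset.mem_map, Finset.mem_univ, true_and]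
    constructor
    · intro hj
      have : j ∈ Set.range e := by rw [Finset.range_orderEmbOfFin]; exact hj
      obtain ⟨a, ha⟩ := this
      exact ⟨a, ha⟩
    · rintro ⟨a, rfl⟩
      have : e a ∈ Set.range e := Set.mem_range_self a
      rwa [Finset.range_orderEmbOfFin] at this
  have h1 : ∑ j ∈ T, descSort x j = ∑ a : Fin m, descSort x (e a) := by
    rw [hmap, Finset.sum_map]; rfl
  rw [h1, partSum_eq, ← Fin.sum_univ_eq_sum_range (dval x) m]
  refine Finset.sum_le_sum fun a _ => ?_
  have hak : (a : ℕ) < k := lt_of_lt_of_le a.isLt hmk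
  have : dval x (a : ℕ) = descSort x ⟨a, hak⟩ := dif_pos hak
  rw [this]
  refine antitone_descSort x ?_
  have := strictMono_le_cast (e.strictMono) a
  exact Fin.mk_le_of_le_val this

lemma exists_partSum (x : Fin k → ℝ) {m : ℕ} (hm : m ≤ k) :
    ∃ S : Finset (Fin k), S.card = m ∧ ∑ i ∈ S, x i = partSum x m := by
  classical
  refine ⟨Finset.univ.map ⟨fun j : Fin m => dperm x (Fin.castLE hm j), ?_⟩, ?_, ?_⟩
  · intro a b h
    exact Fin.castLE_injective hm (Equiv.injective _ h)
  · simp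
  · rw [Finset.sum_map, partSum_eq, ← Fin.sum_univ_eq_sum_range (dval x) m]
    refine Finset.sum_congr rfl fun j _ => ?_
    have hjk : (j : ℕ) < k := lt_of_lt_of_le j.isLt hm
    have h1 : dval x (j : ℕ) = descSort x ⟨j, hjk⟩ := dif_pos hjk
    have h2 : descSort x ⟨(j : ℕ), hjk⟩ = x (dperm x (Fin.castLE hm j)) := by
      rw [descSort_eq]; rfl
    exact (h1.trans h2).symm

lemma partSum_comp (x : Fin k → ℝ) (σ : Equiv.Perm (Fin k)) (m : ℕ) :
    partSum (x ∘ ⇑σ) m = partSum x m := by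
  unfold partSum; rw [descSort_comp]

lemma partSum_descSort (x : Fin k → ℝ) (m : ℕ) :
    partSum (descSort x) m = partSum x m := by
  unfold partSum; rw [descSort_descSort]

lemma partSum_k (x : Fin k → ℝ) : partSum x k = ∑ i, x i := by
  rw [partSum, Finset.sum_congr rfl fun (i : Fin k) _ => if_pos i.isLt, sum_descSort]


lemma antitone_descSort_eq {x : Fin k → ℝ} (hx : Antitone x) : descSort x = x := by
  have h2 : Monotone (x ∘ ⇑(Fin.revPerm : Equiv.Perm (Fin k))) := by
    intro i j hij
    exact hx (by simpa using Fin.rev_le_rev.mpr hij)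
  have heq : x ∘ ⇑(Fin.revPerm.trans (dperm x)) = descSort x ∘ ⇑(Fin.revPerm : Equiv.Perm (Fin k)) := by
    funext i
    simp [descSort_eq, Function.comp, Equiv.trans_apply]
  have h1 : Monotone (x ∘ ⇑(Fin.revPerm.trans (dperm x))) := by
    rw [heq]
    intro i j hij
    exact antitone_descSort x (by simpa using Fin.rev_le_rev.mpr hij)
  have huniq := Tuple.unique_monotone h1 h2
  funext i
  have := congrFun (heq.symm.trans huniq) i.rev
  simpa [Function.comp] using this

lemma majorized_descSort_comp (x : Fin k → ℝ) (σ : Equiv.Perm (Fin k)) :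
    Majorized (descSort x ∘ ⇑σ) x := by
  constructor
  · intro m _
    rw [partSum_comp, partSum_descSort]
  · rw [show ∑ i, (descSort x ∘ ⇑σ) i = ∑ i, descSort x i from Equiv.sum_comp σ _, sum_descSort]

lemma majorized_sum {ι : Type*} (s : Finset ι) (w : ι → ℝ) (f : ι → Fin k → ℝ)
    (y : Fin k → ℝ) (hw : ∀ j ∈ s, 0 ≤ w j) (hw1 : ∑ j ∈ s, w j = 1)
    (hf : ∀ j ∈ s, Majorized (f j) y) :
    Majorized (fun i => ∑ j ∈ s, w j * f j i) y := by
  constructor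
  · intro m hm
    obtain ⟨S, hSc, hSs⟩ := exists_partSum (fun i => ∑ j ∈ s, w j * f j i) hm.le
    rw [← hSs]
    calc ∑ i ∈ S, ∑ j ∈ s, w j * f j i = ∑ j ∈ s, w j * ∑ i ∈ S, f j i := by
          rw [Finset.sum_comm]
          exact Finset.sum_congr rfl fun j _ => (Finset.mul_sum _ _ _).symm
      _ ≤ ∑ j ∈ s, w j * partSum (f j) m := by
          refine Finset.sum_le_sum fun j hj => mul_le_mul_of_nonneg_left ?_ (hw j hj)
          have := sum_le_partSum (f j) S
          rwa [hSc] at this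
      _ ≤ ∑ j ∈ s, w j * partSum y m :=
          Finset.sum_le_sum fun j hj => mul_le_mul_of_nonneg_left ((hf j hj).1 m hm) (hw j hj)
      _ = partSum y m := by rw [← Finset.sum_mul, hw1, one_mul]
  · calc ∑ i, ∑ j ∈ s, w j * f j i = ∑ j ∈ s, w j * ∑ i, f j i := by
          rw [Finset.sum_comm]
          exact Finset.sum_congr rfl fun j _ => (Finset.mul_sum _ _ _).symm
      _ = ∑ j ∈ s, w j * ∑ i, y i :=
          Finset.sum_congr rfl fun j hj => by rw [(hf j hj).2]
      _ = ∑ i, y i := by rw [← Finset.sum_mul, hw1, one_mul]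

lemma abel_key {k : ℕ} {b c : Fin k → ℝ} (h : Majorized b c) (a : Fin k → ℝ)
    (ha : Antitone a) :
    ∑ i, a i * descSort b i ≤ ∑ i, a i * descSort c i := by
  rcases Nat.eq_zero_or_pos k with rfl | hk
  · simp
  set A : ℕ → ℝ := fun n => a ⟨min n (k - 1), by omega⟩ with hA
  set d : ℕ → ℝ := fun n => dval c n - dval b n with hd
  have key : ∑ i, a i * descSort c i - ∑ i, a i * descSort b i
      = ∑ n ∈ Finset.range k, A n • d n := by
    rw [← Finset.sum_sub_distrib, ← Fin.sum_univ_eq_sum_range (fun n => A n • d n) k]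
    refine Finset.sum_congr rfl fun i _ => ?_
    have h1 : A (i : ℕ) = a i := by
      have hik := i.isLt
      have : (⟨min (i : ℕ) (k - 1), by omega⟩ : Fin k) = i := Fin.ext (by
        simp only [Fin.val_mk]
        omega)
      simp only [hA]
      rw [this]
    have h2 : d (i : ℕ) = descSort c i - descSort b i := by
      simp only [hd, dval, dif_pos i.isLt]
    rw [h1, h2, smul_eq_mul, mul_sub]
  have hDsum : ∀ (x : Fin k → ℝ) (n : ℕ), n ≤ k →
      ∑ j ∈ Finset.range n, dval x j = partSum x n := fun x n _ => (partSum_eq x n).symm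
  have habel := Finset.sum_range_by_parts A d k
  have hG : ∑ n ∈ Finset.range k, d n = 0 := by
    simp only [hd]
    rw [Finset.sum_sub_distrib, hDsum c k le_rfl, hDsum b k le_rfl, partSum_k, partSum_k, h.2]
    ring
  have hterm : ∀ n ∈ Finset.range (k - 1), (A (n + 1) - A n) • (∑ j ∈ Finset.range (n + 1), d j) ≤ 0 := by
    intro n hn
    have hn' : n < k - 1 := Finset.mem_range.mp hn
    have hAle : A (n + 1) ≤ A n := by
      refine ha ?_
      simp only [Fin.mk_le_mk]
      omega
    have hDpos : 0 ≤ ∑ j ∈ Finset.range (n + 1), d j := by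
      simp only [hd]
      rw [Finset.sum_sub_distrib, hDsum c (n + 1) (by omega), hDsum b (n + 1) (by omega)]
      have := h.1 (n + 1) (by omega)
      linarith
    have : A (n + 1) - A n ≤ 0 := by linarith
    rw [smul_eq_mul]
    exact mul_nonpos_of_nonpos_of_nonneg this hDpos
  have : (0:ℝ) ≤ ∑ n ∈ Finset.range k, A n • d n := by
    rw [habel, hG, smul_zero, zero_sub]
    have : ∑ n ∈ Finset.range (k - 1), (A (n + 1) - A n) • (∑ j ∈ Finset.range (n + 1), d j) ≤ 0 :=
      Finset.sum_nonpos hterm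
    linarith
  linarith [key ▸ this]

lemma sum_mul_le_descSort (c b : Fin k → ℝ) :
    ∑ i, c i * b i ≤ ∑ i, descSort c i * descSort b i := by
  have hmono : Monovary (descSort c) (descSort b) := by
    intro i j hgj
    rcases le_or_gt j i with hji | hij
    · exact antitone_descSort c hji
    · exact absurd hgj (not_lt.mpr (antitone_descSort b hij.le))
  have hc : ∀ i, c i = descSort c ((dperm c).symm i) := by
    intro i; rw [descSort_eq]; simp
  have hb : ∀ i, b i = descSort b ((dperm b).symm i) := by
    intro i; rw [descSort_eq]; simp
  have h1 : ∑ i, c i * b i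
      = ∑ j, descSort c j * descSort b (((dperm c).trans (dperm b).symm) j) := by
    rw [← Equiv.sum_comp (dperm c) (fun i => c i * b i)]
    refine Finset.sum_congr rfl fun j _ => ?_
    rw [hc (dperm c j), hb (dperm c j)]
    simp
  rw [h1]
  exact hmono.sum_mul_comp_perm_le_sum_mul

lemma hlp {β γ : Fin k → ℝ} (h : Majorized β γ) :
    β ∈ convexHull ℝ
      (↑(Finset.univ.image (fun σ : Equiv.Perm (Fin k) => γ ∘ ⇑σ)) : Set (Fin k → ℝ)) := by
  classical
  by_contra hcon
  obtain ⟨f, u, hfu, huβ⟩ := geometric_hahn_banach_closed_point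
    (convex_convexHull ℝ _)
    (((Finset.univ.image (fun σ : Equiv.Perm (Fin k) => γ ∘ ⇑σ)).finite_toSet.isCompact_convexHull ℝ).isClosed)
    hcon
  set c : Fin k → ℝ := fun i => f (Pi.single i 1) with hcdef
  have hfy : ∀ y : Fin k → ℝ, f y = ∑ i, c i * y i := by
    intro y
    have hy : y = ∑ i, Pi.single i (y i) := (Finset.univ_sum_single y).symm
    conv_lhs => rw [hy]
    rw [map_sum]
    refine Finset.sum_congr rfl fun i _ => ?_
    have : (Pi.single i (y i) : Fin k → ℝ) = y i • (Pi.single i (1:ℝ) : Fin k → ℝ) := by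
      rw [← Pi.single_smul, smul_eq_mul, mul_one]
    rw [this, map_smul, smul_eq_mul, hcdef, mul_comm]
  set σ₀ : Equiv.Perm (Fin k) := ((dperm c).symm).trans (dperm γ) with hσ₀
  have h4 : ∑ i, descSort c i * descSort γ i = ∑ i, c i * (γ ∘ ⇑σ₀) i := by
    rw [← Equiv.sum_comp (dperm c) (fun i => c i * (γ ∘ ⇑σ₀) i)]
    refine Finset.sum_congr rfl fun j _ => ?_
    rw [descSort_eq c, descSort_eq γ]
    simp [hσ₀]
  have hchain : f β ≤ f (γ ∘ ⇑σ₀) := by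
    rw [hfy β, hfy (γ ∘ ⇑σ₀), ← h4]
    exact le_trans (sum_mul_le_descSort c β) (abel_key h (descSort c) (antitone_descSort c))
  have hmem : γ ∘ ⇑σ₀ ∈ convexHull ℝ
      (↑(Finset.univ.image (fun σ : Equiv.Perm (Fin k) => γ ∘ ⇑σ)) : Set (Fin k → ℝ)) := by
    apply subset_convexHull
    simp only [Finset.coe_image, Finset.coe_univ, Set.image_univ, Set.mem_range]
    exact ⟨σ₀, rfl⟩
  have := hfu _ hmem
  linarith

end MajHelp

open MeasureTheory intervalIntegral

lemma MajHelp.intervalIntegrable_sum {ι : Type*} (s : Finset ι) {f : ι → ℝ → ℝ} {a b : ℝ}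
    (h : ∀ i ∈ s, IntervalIntegrable (f i) volume a b) :
    IntervalIntegrable (fun t => ∑ i ∈ s, f i t) volume a b := by
  have h2 := IntervalIntegrable.sum s h
  rwa [Finset.sum_fn] at h2


set_option maxHeartbeats 1000000

open MeasureTheory intervalIntegral

/-- With `γ = ∫₀ᵀ λ↓(t) dt`, the set of entrywise integrals of integrable
selections `μ(t) ≺ λ(t)` equals the set of vectors majorized by `γ`. -/
theorem integral_majorized_set_eq {k : ℕ} (T : ℝ) (hT : 0 ≤ T)
    (l : ℝ → Fin k → ℝ)
    (hl : ∀ i, IntervalIntegrable (fun t => l t i) volume 0 T)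
    (hld : ∀ i, IntervalIntegrable (fun t => descSort (l t) i) volume 0 T) :
    {β : Fin k → ℝ | ∃ μ : ℝ → Fin k → ℝ,
      (∀ i, IntervalIntegrable (fun t => μ t i) volume 0 T) ∧
      (∀ t ∈ Set.Icc (0 : ℝ) T, Majorized (μ t) (l t)) ∧
      β = fun i => ∫ t in (0 : ℝ)..T, μ t i}
    = {β : Fin k → ℝ |
        Majorized β (fun i => ∫ t in (0 : ℝ)..T, descSort (l t) i)} := by
  set γ : Fin k → ℝ := fun i => ∫ t in (0:ℝ)..T, descSort (l t) i with hγ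
  have hγanti : Antitone γ := by
    intro i j hij
    exact intervalIntegral.integral_mono_on hT (hld j) (hld i)
      (fun t _ => MajHelp.antitone_descSort (l t) hij)
  have hγdesc : descSort γ = γ := MajHelp.antitone_descSort_eq hγanti
  ext β
  simp only [Set.mem_setOf_eq]
  constructor
  · rintro ⟨μ, hμint, hμmaj, rfl⟩
    refine ⟨?_, ?_⟩
    · intro m hm
      obtain ⟨S, hSc, hSs⟩ := MajHelp.exists_partSum (fun i => ∫ t in (0:ℝ)..T, μ t i) hm.le
      rw [← hSs]
      have hint2 : ∀ i : Fin k, IntervalIntegrable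
          (fun t => if (i:ℕ) < m then descSort (l t) i else 0) volume 0 T := by
        intro i
        by_cases hi : (i:ℕ) < m
        · simpa [hi] using hld i
        · simpa [hi] using
            (intervalIntegrable_const : IntervalIntegrable (fun _ : ℝ => (0:ℝ)) volume 0 T)
      calc ∑ i ∈ S, ∫ t in (0:ℝ)..T, μ t i
          = ∫ t in (0:ℝ)..T, ∑ i ∈ S, μ t i :=
            (intervalIntegral.integral_finset_sum (fun i _ => hμint i)).symm
        _ ≤ ∫ t in (0:ℝ)..T, ∑ i : Fin k, (if (i:ℕ) < m then descSort (l t) i else 0) := by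
            refine intervalIntegral.integral_mono_on hT
              (MajHelp.intervalIntegrable_sum S (fun i _ => hμint i))
              (MajHelp.intervalIntegrable_sum Finset.univ (fun i _ => hint2 i)) ?_
            intro t ht
            have h1 := MajHelp.sum_le_partSum (μ t) S
            rw [hSc] at h1
            have h2 := (hμmaj t ht).1 m hm
            calc ∑ i ∈ S, μ t i ≤ partSum (μ t) m := h1
              _ ≤ partSum (l t) m := h2
              _ = ∑ i : Fin k, (if (i:ℕ) < m then descSort (l t) i else 0) := rfl
        _ = ∑ i : Fin k, (if (i:ℕ) < m then γ i else 0) := by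
            rw [intervalIntegral.integral_finset_sum (fun i _ => hint2 i)]
            refine Finset.sum_congr rfl fun i _ => ?_
            by_cases hi : (i:ℕ) < m
            · simp only [hi, if_true, hγ]
            · simp [hi]
        _ = partSum γ m := by rw [partSum, hγdesc]
    · calc ∑ i, ∫ t in (0:ℝ)..T, μ t i
          = ∫ t in (0:ℝ)..T, ∑ i, μ t i :=
            (intervalIntegral.integral_finset_sum (fun i _ => hμint i)).symm
        _ = ∫ t in (0:ℝ)..T, ∑ i, descSort (l t) i := by
            refine intervalIntegral.integral_congr ?_
            intro t ht
            rw [Set.uIcc_of_le hT] at ht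
            show ∑ i, μ t i = ∑ i, descSort (l t) i
            rw [(hμmaj t ht).2, MajHelp.sum_descSort]
        _ = ∑ i, γ i := intervalIntegral.integral_finset_sum (fun i _ => hld i)
  · intro hβ
    have hmem := MajHelp.hlp hβ
    rw [convexHull_eq] at hmem
    obtain ⟨ι, tF, w, z, hw0, hw1, hz, hcm⟩ := hmem
    have hzperm : ∀ j ∈ tF, ∃ σ : Equiv.Perm (Fin k), γ ∘ ⇑σ = z j := by
      intro j hj
      have := hz j hj
      simp only [Finset.coe_image, Finset.coe_univ, Set.image_univ, Set.mem_range] at this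
      exact this
    choose! σs hσs using hzperm
    refine ⟨fun t i => ∑ j ∈ tF, w j * descSort (l t) (σs j i), ?_, ?_, ?_⟩
    · intro i
      exact MajHelp.intervalIntegrable_sum tF (fun j _ => (hld (σs j i)).const_mul (w j))
    · intro t _
      exact MajHelp.majorized_sum tF w (fun j => descSort (l t) ∘ ⇑(σs j)) (l t)
        hw0 hw1 (fun j _ => MajHelp.majorized_descSort_comp (l t) (σs j))
    · funext i
      rw [intervalIntegral.integral_finset_sum (fun j _ => (hld (σs j i)).const_mul (w j))]
      calc β i = (tF.centerMass w z) i := by rw [hcm]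
        _ = (∑ j ∈ tF, w j • z j) i := by rw [Finset.centerMass_eq_of_sum_1 _ z hw1]
        _ = ∑ j ∈ tF, w j * z j i := by rw [Finset.sum_apply]; rfl
        _ = ∑ j ∈ tF, w j * γ (σs j i) :=
            Finset.sum_congr rfl fun j hj => by rw [← hσs j hj]; rfl
        _ = ∑ j ∈ tF, ∫ t in (0:ℝ)..T, w j * descSort (l t) (σs j i) := by
            refine Finset.sum_congr rfl fun j _ => ?_
            rw [intervalIntegral.integral_const_mul]
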